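/- Let T̂ be a C×E matrix over a field F with every C×C submatrix invertible, and let k < C/2. Then the map Z ↦ T̂Z is injective on the set of E×n matrices over F each of whose columns has weight at most k. Consequently, the number of distinct values of T̂Z over this set is exactly (Σ_{j=0}^{k} binom(E,j)(|F|-1)^j)^n when F is finite. -/

import Mathlib

open Finset


lemma keyvanish {F : Type*} [Field F] [DecidableEq F] {C E : ℕ} (hCE : C ≤ E)
    (T : Matrix (Fin C) (Fin E) F)
    (hsub : ∀ f : Fin C → Fin E, Function.Injective f → IsUnit (T.submatrix id f))
    (v : Fin E → F) (hw : (Finset.univ.filter fun i => v i ≠ 0).card < C)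
    (hv : T.mulVec v = 0) : v = 0 := by
  obtain ⟨t, hst, htc⟩ := Finset.exists_superset_card_eq hw.le (by simp [hCE])
  let e := t.orderIsoOfFin htc
  let f : Fin C → Fin E := fun j => (e j : Fin E)
  have hf : Function.Injective f := fun a b h => e.injective (Subtype.ext h)
  have hzero : ∀ i : Fin E, i ∉ t → v i = 0 := by
    intro i hi
    by_contra h
    exact hi (hst (by simp [h]))
  have hM : (T.submatrix id f).mulVec (v ∘ f) = 0 := by
    funext i
    have := congrFun hv i
    simp only [Matrix.mulVec, dotProduct, Pi.zero_apply] at this ⊢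
    rw [show (0:F) = ∑ e ∈ t, T i e * v e by
      rw [← this, ← Finset.sum_subset t.subset_univ]
      intro x _ hx; rw [hzero x hx, mul_zero]]
    rw [← Finset.sum_attach t (fun x => T i x * v x), ← Finset.univ_eq_attach]
    exact Fintype.sum_equiv e.toEquiv (fun j => T i (f j) * v (f j)) (fun x => T i x.1 * v x.1) (fun j => rfl)
  have hinj := Matrix.mulVec_injective_iff_isUnit.mpr (hsub f hf)
  have hvf : v ∘ f = 0 := hinj (by simpa using hM)
  funext i
  by_cases hi : i ∈ t
  · obtain ⟨j, hj⟩ := e.surjective ⟨i, hi⟩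
    have := congrFun hvf j
    simpa [f, hj] using this
  · exact hzero i hi

lemma count_support_eq {F : Type*} [Field F] [Fintype F] [DecidableEq F] {E : ℕ}
    (s : Finset (Fin E)) :
    (Finset.univ.filter fun v : Fin E → F => (Finset.univ.filter fun i => v i ≠ 0) = s).card
      = (Fintype.card F - 1) ^ s.card := by
  rw [← Fintype.card_subtype]
  have e : {v : Fin E → F // (Finset.univ.filter fun i => v i ≠ 0) = s}
      ≃ (s → {x : F // x ≠ 0}) := by
    refine
      { toFun := fun v i => ⟨v.1 i, ?_⟩
        invFun := fun g => ⟨fun i => if h : i ∈ s then (g ⟨i, h⟩).1 else 0, ?_⟩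
        left_inv := ?_
        right_inv := ?_ }
    · have hi : (i : Fin E) ∈ Finset.univ.filter fun j => v.1 j ≠ 0 := by
        rw [v.2]; exact i.2
      simpa using hi
    · ext i
      simp only [Finset.mem_filter, Finset.mem_univ, true_and]
      constructor
      · intro h
        by_contra hi
        simp [hi] at h
      · intro h
        simp only [h, dif_pos]
        exact (g ⟨i, h⟩).2
    · intro v
      ext i
      by_cases hi : i ∈ s
      · simp [hi]
      · simp only [hi, dif_neg, not_false_iff]
        have := v.2
        by_contra h
        exact hi (this ▸ (by simp [Ne.symm h] : i ∈ Finset.univ.filter fun i => v.1 i ≠ 0))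
    · intro g
      ext i
      simp [i.2]
  rw [Fintype.card_congr e]
  rw [Fintype.card_fun, Fintype.card_coe]
  congr 1
  have : ∀ x : F, (x ≠ 0) = ¬(x = 0) := fun x => rfl
  calc Fintype.card {x : F // x ≠ 0} = Fintype.card F - Fintype.card {x : F // x = 0} :=
        Fintype.card_subtype_compl _
    _ = Fintype.card F - 1 := by rw [Fintype.card_subtype_eq]

lemma count_low_weight {F : Type*} [Field F] [Fintype F] [DecidableEq F] (E k : ℕ) :
    (Finset.univ.filter fun v : Fin E → F =>
        (Finset.univ.filter fun i => v i ≠ 0).card ≤ k).card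
      = ∑ j ∈ Finset.range (k + 1), Nat.choose E j * (Fintype.card F - 1) ^ j := by
  rw [Finset.card_eq_sum_card_fiberwise
    (f := fun v : Fin E → F => Finset.univ.filter fun i => v i ≠ 0)
    (t := (Finset.univ : Finset (Fin E)).powerset.filter fun s => s.card ≤ k)
    (by intro v hv; simp only [Finset.mem_coe, Finset.mem_filter, Finset.mem_powerset] at *
        exact ⟨Finset.subset_univ _, hv.2⟩)]
  have h1 : ∀ s ∈ (Finset.univ : Finset (Fin E)).powerset.filter fun s => s.card ≤ k,
      ((Finset.univ.filter fun v : Fin E → F =>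
        (Finset.univ.filter fun i => v i ≠ 0).card ≤ k).filter
        (fun v => (Finset.univ.filter fun i => v i ≠ 0) = s)).card
      = (Fintype.card F - 1) ^ s.card := by
    intro s hs
    simp only [Finset.mem_filter] at hs
    rw [Finset.filter_filter, ← count_support_eq (F := F) s]
    congr 1
    apply Finset.filter_congr
    intro v _
    constructor
    · rintro ⟨_, h⟩; exact h
    · intro h; exact ⟨h ▸ hs.2, h⟩
  rw [Finset.sum_congr rfl h1]
  rw [← Finset.sum_fiberwise_of_maps_to
    (g := fun s : Finset (Fin E) => s.card) (t := Finset.range (k + 1))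
    (by intro s hs; simp only [Finset.mem_coe, Finset.mem_filter] at hs
        exact Finset.mem_range.mpr (Nat.lt_succ_of_le hs.2))]
  refine Finset.sum_congr rfl fun j hj => ?_
  have hfib : ((Finset.univ : Finset (Fin E)).powerset.filter fun s => s.card ≤ k).filter
      (fun s => s.card = j) = Finset.powersetCard j (Finset.univ : Finset (Fin E)) := by
    ext s
    simp only [Finset.mem_filter, Finset.mem_powerset, Finset.mem_powersetCard_univ]
    constructor
    · rintro ⟨_, h⟩; exact h
    · intro h
      exact ⟨⟨Finset.subset_univ _, h ▸ Nat.lt_succ_iff.mp (Finset.mem_range.mp hj)⟩, h⟩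
  rw [hfib]
  rw [Finset.sum_congr rfl fun s hs => by
    rw [Finset.mem_powersetCard_univ.mp hs]]
  rw [Finset.sum_const, Finset.card_powersetCard, Finset.card_univ, Fintype.card_fin,
    smul_eq_mul]


/-- If every C×C submatrix of `T` is invertible and `2k < C`, the map `Z ↦ T Z` is
injective on E×n matrices all of whose columns have weight at most `k`; consequently,
over a finite field `F` the number of distinct values of `T Z` is exactly
`(Σ_{j=0}^{k} binom(E,j)(|F|-1)^j)^n`. -/
theorem mulMatrix_injOn_low_colWeight {F : Type*} [Field F] [Fintype F] [DecidableEq F]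
    (C E n k : ℕ) (hCE : C ≤ E) (hk : 2 * k < C)
    (T : Matrix (Fin C) (Fin E) F)
    (hsub : ∀ f : Fin C → Fin E, Function.Injective f → IsUnit (T.submatrix id f))
    (S : Set (Matrix (Fin E) (Fin n) F))
    (hS : S = {Z | ∀ j : Fin n, (Finset.univ.filter fun i => Z i j ≠ 0).card ≤ k}) :
    Set.InjOn (fun Z => T * Z) S ∧
    ((fun Z => T * Z) '' S).ncard =
      (∑ j ∈ Finset.range (k + 1), Nat.choose E j * (Fintype.card F - 1) ^ j) ^ n := by
  subst hS
  have hinj : Set.InjOn (fun Z => T * Z)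
      {Z : Matrix (Fin E) (Fin n) F |
        ∀ j : Fin n, (Finset.univ.filter fun i => Z i j ≠ 0).card ≤ k} := by
    intro Z1 h1 Z2 h2 heq
    simp only [Set.mem_setOf_eq] at h1 h2
    ext i j
    set v : Fin E → F := fun i => Z1 i j - Z2 i j with hv
    have hsupp : (Finset.univ.filter fun i => v i ≠ 0)
        ⊆ (Finset.univ.filter fun i => Z1 i j ≠ 0) ∪
          (Finset.univ.filter fun i => Z2 i j ≠ 0) := by
      intro x hx
      simp only [Finset.mem_filter, Finset.mem_univ, true_and, Finset.mem_union] at hx ⊢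
      by_contra h
      push_neg at h
      simp [hv, h.1, h.2] at hx
    have hw : (Finset.univ.filter fun i => v i ≠ 0).card < C := by
      have h3 := Finset.card_le_card hsupp
      have h4 := Finset.card_union_le (Finset.univ.filter fun i => Z1 i j ≠ 0)
        (Finset.univ.filter fun i => Z2 i j ≠ 0)
      have h5 := h1 j
      have h6 := h2 j
      omega
    have hmv : T.mulVec v = 0 := by
      funext i'
      have := congrFun (congrFun heq i') j
      simp only [Matrix.mul_apply] at this
      simp only [Matrix.mulVec, dotProduct, hv, Pi.zero_apply, mul_sub,
        Finset.sum_sub_distrib, this, sub_self]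
    have := congrFun (keyvanish hCE T hsub v hw hmv) i
    simpa [hv, sub_eq_zero] using this
  refine ⟨hinj, ?_⟩
  rw [Set.ncard_image_of_injOn hinj, ← Nat.card_coe_set_eq]
  have e : {Z : Matrix (Fin E) (Fin n) F //
        Z ∈ {Z : Matrix (Fin E) (Fin n) F |
          ∀ j : Fin n, (Finset.univ.filter fun i => Z i j ≠ 0).card ≤ k}}
      ≃ (Fin n → {v : Fin E → F // (Finset.univ.filter fun i => v i ≠ 0).card ≤ k}) :=
    { toFun := fun Z j => ⟨fun i => Z.1 i j, Z.2 j⟩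
      invFun := fun g => ⟨Matrix.of fun i j => (g j).1 i, fun j => (g j).2⟩
      left_inv := fun Z => rfl
      right_inv := fun g => rfl }
  rw [Nat.card_congr e, Nat.card_pi]
  rw [Finset.prod_const, Finset.card_univ, Fintype.card_fin]
  congr 1
  rw [Nat.card_eq_fintype_card, Fintype.card_subtype]
  exact count_low_weight E k
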